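/- Let X be the constructed set and X_1, ..., X_r a Tverberg partition of X. Then for each 1 ≤ i ≤ r, the set X_i ∩ A contains exactly one point. -/
import Mathlib

open Finset Set

/-- The standard basis vector `e^j` of `ℝ^d`. -/
noncomputable def stdVec (d : ℕ) (j : Fin d) : Fin d → ℝ := Pi.single j 1

/-- The set `A_j = {e^j, 2e^j, ..., (r-1)e^j}`. -/
def Aset (d r : ℕ) (j : Fin d) : Set (Fin d → ℝ) :=
  {v | ∃ k : ℕ, 1 ≤ k ∧ k ≤ r - 1 ∧ v = (k : ℝ) • stdVec d j}

/-- The point `x^i`, with `x^i_j = 0` if `i = i(j)` and `x^i_j = -i` otherwise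
(indices taken in `{1,...,r}`, so `Fin r` index `i` corresponds to `i+1`). -/
def xpt (d r : ℕ) (ι : Fin d → Fin r) (i : Fin r) : Fin d → ℝ :=
  fun j => if ι j = i then 0 else -((i : ℕ) + 1 : ℝ)

/-- The set `A = {x^1, ..., x^r}`. -/
def Apts (d r : ℕ) (ι : Fin d → Fin r) : Set (Fin d → ℝ) := Set.range (xpt d r ι)

/-- The constructed set `X = A ∪ A_1 ∪ ⋯ ∪ A_d`. -/
def Xset (d r : ℕ) (ι : Fin d → Fin r) : Set (Fin d → ℝ) :=
  Apts d r ι ∪ ⋃ j, Aset d r j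

/-- `P : Fin r → Set (Fin d → ℝ)` is a Tverberg partition of `X`:
a partition of `X` into pairwise disjoint parts whose convex hulls share a point. -/
def IsTverbergPartition (d r : ℕ) (X : Set (Fin d → ℝ))
    (P : Fin r → Set (Fin d → ℝ)) : Prop :=
  (⋃ i, P i) = X ∧ (∀ i i', i ≠ i' → Disjoint (P i) (P i')) ∧
    ∃ p : Fin d → ℝ, ∀ i, p ∈ convexHull ℝ (P i)

lemma xpt_inj (d r : ℕ) (hd : 1 ≤ d) (ι : Fin d → Fin r) :
    Function.Injective (xpt d r ι) := by
  intro i i' h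
  have hj := congrFun h ⟨0, hd⟩
  unfold xpt at hj
  rcases eq_or_ne (ι ⟨0, hd⟩) i with h1 | h1 <;> rcases eq_or_ne (ι ⟨0, hd⟩) i' with h2 | h2
  · exact h1.symm.trans h2
  · exfalso
    rw [if_pos h1, if_neg h2] at hj
    have : (0:ℝ) ≤ (i' : ℕ) := Nat.cast_nonneg _
    linarith [hj]
  · exfalso
    rw [if_neg h1, if_pos h2] at hj
    have : (0:ℝ) ≤ (i : ℕ) := Nat.cast_nonneg _
    linarith [hj]
  · rw [if_neg h1, if_neg h2] at hj
    have : ((i:ℕ):ℝ) = ((i':ℕ):ℝ) := by linarith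
    exact Fin.ext (by exact_mod_cast this)

lemma sum_linear (d : ℕ) : IsLinearMap ℝ (fun v : Fin d → ℝ => ∑ j, v j) := by
  constructor
  · intro x y; simp [Finset.sum_add_distrib]
  · intro c x; simp [Finset.mul_sum]

/-- Corollary 3.2: in any Tverberg partition of the constructed set `X`,
each part meets `A` in exactly one point. -/
theorem part_meets_A_once (d r : ℕ) (hd : 1 ≤ d) (hr : 1 ≤ r)
    (a : Fin r → ℕ) (hpos : ∀ i, 1 ≤ a i) (hle : ∀ i, a i ≤ d + 1)
    (hsum : ∑ i, a i = (d + 1) * (r - 1) + 1)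
    (ι : Fin d → Fin r)
    (hι : ∀ i, (Finset.univ.filter fun j => ι j = i).card = d + 1 - a i)
    (P : Fin r → Set (Fin d → ℝ))
    (hTP : IsTverbergPartition d r (Xset d r ι) P) :
    ∀ i, (P i ∩ Apts d r ι).ncard = 1 := by
  classical
  obtain ⟨hcover, hdisj, p, hp⟩ := hTP
  have hsubX : ∀ i, P i ⊆ Xset d r ι := fun i => hcover ▸ Set.subset_iUnion P i
  -- Step 1: each part meets A.
  have hmeets : ∀ i, (P i ∩ Apts d r ι).Nonempty := by
    by_contra hcon
    push_neg at hcon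
    obtain ⟨i0, hi0⟩ := hcon
    -- P i0 ⊆ ⋃ A_j
    have hsub : P i0 ⊆ ⋃ j, Aset d r j := by
      intro x hx
      rcases hsubX i0 hx with hA | hA
      · exact (Set.eq_empty_iff_forall_notMem.mp hi0 x ⟨hx, hA⟩).elim
      · exact hA
    -- hence the sum of coordinates of p is at least 1
    have hsum1 : 1 ≤ ∑ j, p j := by
      have hhalf : (⋃ j, Aset d r j) ⊆ {v : Fin d → ℝ | 1 ≤ ∑ j, v j} := by
        rintro v hv
        simp only [Set.mem_iUnion] at hv
        obtain ⟨j, k, hk1, _, rfl⟩ := hv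
        have : ∑ j', ((k:ℝ) • stdVec d j) j' = (k:ℝ) := by
          simp [stdVec, ← Finset.mul_sum]
        simp only [Set.mem_setOf_eq, this]
        exact_mod_cast hk1
      have hconv : Convex ℝ {v : Fin d → ℝ | 1 ≤ ∑ j, v j} :=
        convex_halfSpace_ge (sum_linear d) 1
      exact convexHull_min (hsub.trans hhalf) hconv (hp i0)
    -- pick a coordinate where p is positive
    have hj0 : ∃ j0, 0 < p j0 := by
      by_contra hcon2
      push_neg at hcon2
      have : ∑ j, p j ≤ 0 := Finset.sum_nonpos fun j _ => hcon2 j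
      have hdpos : (0:ℕ) < d := hd
      linarith
    obtain ⟨j0, hj0⟩ := hj0
    -- every part must meet A_{j0}
    have hAj0 : ∀ i, (P i ∩ Aset d r j0).Nonempty := by
      intro i
      by_contra hne
      rw [Set.not_nonempty_iff_eq_empty] at hne
      have hsub2 : P i ⊆ {v : Fin d → ℝ | v j0 ≤ 0} := by
        intro x hx
        rcases hsubX i hx with hA | hA
        · obtain ⟨i', rfl⟩ := hA
          simp only [Set.mem_setOf_eq, xpt]
          split
          · exact le_refl 0
          · have : (0:ℝ) ≤ ((i':ℕ):ℝ) := Nat.cast_nonneg _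
            linarith
        · simp only [Set.mem_iUnion] at hA
          obtain ⟨j, hj⟩ := hA
          rcases eq_or_ne j j0 with rfl | hjj
          · exact (Set.eq_empty_iff_forall_notMem.mp hne x ⟨hx, hj⟩).elim
          · obtain ⟨k, _, _, rfl⟩ := hj
            simp [Set.mem_setOf_eq, stdVec, Pi.single_apply, hjj.symm]
      have hconv : Convex ℝ {v : Fin d → ℝ | v j0 ≤ 0} :=
        convex_halfSpace_le (IsLinearMap.mk (fun x y => rfl) (fun c x => rfl)) 0
      have := convexHull_min hsub2 hconv (hp i)
      simp only [Set.mem_setOf_eq] at this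
      linarith
    -- choose one point of A_{j0} in each part: an injection Fin r → Aset, |Aset| ≤ r-1
    choose q hq1 hq2 using fun i => hAj0 i
    have hqinj : Function.Injective q := by
      intro i i' hEq
      by_contra hne
      exact Set.disjoint_left.mp (hdisj i i' hne) (hq1 i) (hEq ▸ hq1 i')
    set AFin : Finset (Fin d → ℝ) :=
      (Finset.Icc 1 (r-1)).image (fun k : ℕ => (k:ℝ) • stdVec d j0) with hAFin
    have hqmem : ∀ i, q i ∈ AFin := by
      intro i
      obtain ⟨k, hk1, hk2, hEq⟩ := hq2 i
      simp only [hAFin, Finset.mem_image]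
      exact ⟨k, Finset.mem_Icc.mpr ⟨hk1, hk2⟩, hEq.symm⟩
    have hcard : r ≤ AFin.card := by
      have : (Finset.univ.image q).card = r := by
        rw [Finset.card_image_of_injective _ hqinj, Finset.card_univ, Fintype.card_fin]
      calc r = (Finset.univ.image q).card := this.symm
        _ ≤ AFin.card := Finset.card_le_card (by
            intro x hx
            simp only [Finset.mem_image, Finset.mem_univ, true_and] at hx
            obtain ⟨i, rfl⟩ := hx
            exact hqmem i)
    have hcard2 : AFin.card ≤ r - 1 := by
      calc AFin.card ≤ (Finset.Icc 1 (r-1)).card := Finset.card_image_le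
        _ = r - 1 := by rw [Nat.card_Icc]; omega
    omega
  -- Step 2: counting
  have hinj := xpt_inj d r hd ι
  set Afin : Finset (Fin d → ℝ) := Finset.univ.image (xpt d r ι) with hAfin
  have hAco : (↑Afin : Set (Fin d → ℝ)) = Apts d r ι := by
    simp [hAfin, Apts]
  have hAcard : Afin.card = r := by
    rw [hAfin, Finset.card_image_of_injective _ hinj, Finset.card_univ, Fintype.card_fin]
  set B : Fin r → Finset (Fin d → ℝ) := fun i => Afin.filter (· ∈ P i) with hB
  have hBco : ∀ i, (↑(B i) : Set (Fin d → ℝ)) = P i ∩ Apts d r ι := by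
    intro i
    ext x
    simp only [hB, Finset.coe_filter, Set.mem_setOf_eq, Set.mem_inter_iff]
    rw [← hAco]
    constructor <;> (rintro ⟨h1, h2⟩; exact ⟨h2, h1⟩)
  have hBdisj : ∀ i i', i ≠ i' → Disjoint (B i) (B i') := by
    intro i i' hne
    rw [Finset.disjoint_left]
    intro x hx hx'
    simp only [hB, Finset.mem_filter] at hx hx'
    exact Set.disjoint_left.mp (hdisj i i' hne) hx.2 hx'.2
  have hBsum : ∑ i, (B i).card ≤ r := by
    rw [← Finset.card_biUnion (fun i _ i' _ h => hBdisj i i' h)]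
    calc (Finset.univ.biUnion B).card ≤ Afin.card :=
        Finset.card_le_card (by
          intro x hx
          simp only [Finset.mem_biUnion] at hx
          obtain ⟨i, _, hx⟩ := hx
          exact (Finset.mem_filter.mp hx).1)
      _ = r := hAcard
  have hBpos : ∀ i, 1 ≤ (B i).card := by
    intro i
    rw [Nat.one_le_iff_ne_zero, ← Nat.pos_iff_ne_zero, Finset.card_pos]
    obtain ⟨x, hx⟩ := hmeets i
    exact ⟨x, by rw [← Finset.mem_coe, hBco i]; exact hx⟩
  intro i
  rw [← hBco i, Set.ncard_coe_finset]
  have hrest : r - 1 ≤ ∑ i' ∈ Finset.univ.erase i, (B i').card := by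
    calc r - 1 = ∑ _i' ∈ Finset.univ.erase i, 1 := by
          rw [Finset.sum_const, smul_eq_mul, mul_one, Finset.card_erase_of_mem (Finset.mem_univ i),
            Finset.card_univ, Fintype.card_fin]
      _ ≤ _ := Finset.sum_le_sum fun i' _ => hBpos i'
  have htot : (B i).card + ∑ i' ∈ Finset.univ.erase i, (B i').card = ∑ i', (B i').card :=
    Finset.add_sum_erase _ (fun i' => (B i').card) (Finset.mem_univ i)
  have := hBpos i
  omega
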